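/- Let B be a real normed space, let T be a nonexpansive linear operator on B, and let x ∈ B. Then for all natural numbers n ≥ 1 and k ≥ 1, ‖A_{kn} x‖ ≤ ‖A_n x‖ (since A_{kn} x = (1/k) ∑_{i<k} T^{in} (A_n x)). Consequently, if the sequence (A_n x)_{n≥1} converges to some y ∈ B, then ‖y‖ = inf_{n≥1} ‖A_n x‖. -/

import Mathlib

open Finset

/-- The ergodic averages `A n x = (1/n) ∑_{i<n} Tⁱ x`. -/
noncomputable def ergAvg {B : Type*} [NormedAddCommGroup B] [Module ℝ B]
    (T : B →ₗ[ℝ] B) (n : ℕ) (x : B) : B :=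
  (n : ℝ)⁻¹ • ∑ i ∈ Finset.range n, (T ^ i) x

/-- For a nonexpansive linear operator `T` on a real normed space: `‖A_{kn} x‖ ≤ ‖A_n x‖` for
all `n, k ≥ 1`; consequently, if the sequence `(A_n x)_{n ≥ 1}` converges to `y`, then
`‖y‖ = inf_{n ≥ 1} ‖A_n x‖`. -/
theorem stmt16 {B : Type*} [NormedAddCommGroup B] [NormedSpace ℝ B]
    (T : B →ₗ[ℝ] B) (hT : ∀ y : B, ‖T y‖ ≤ ‖y‖) (x : B) :
    (∀ n k : ℕ, 1 ≤ n → 1 ≤ k → ‖ergAvg T (k * n) x‖ ≤ ‖ergAvg T n x‖) ∧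
      ∀ y : B, Filter.Tendsto (fun n => ergAvg T n x) Filter.atTop (nhds y) →
        ‖y‖ = ⨅ n : ℕ, ‖ergAvg T (n + 1) x‖ := by
  have hpow : ∀ (m : ℕ) (y : B), ‖(T ^ m) y‖ ≤ ‖y‖ := by
    intro m
    induction m with
    | zero => intro y; simp
    | succ m ih =>
      intro y
      rw [pow_succ, Module.End.mul_apply]
      exact (ih (T y)).trans (hT y)
  have hsum : ∀ n k : ℕ,
      ‖∑ j ∈ range (k * n), (T ^ j) x‖ ≤ k * ‖∑ j ∈ range n, (T ^ j) x‖ := by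
    intro n k
    induction k with
    | zero => simp
    | succ k ih =>
      have hsplit : ∑ j ∈ range ((k + 1) * n), (T ^ j) x
          = ∑ j ∈ range (k * n), (T ^ j) x
            + (T ^ (k * n)) (∑ j ∈ range n, (T ^ j) x) := by
        rw [map_sum, Nat.succ_mul, Finset.sum_range_add]
        congr 1
        refine Finset.sum_congr rfl fun j _ => ?_
        rw [← Module.End.mul_apply, ← pow_add]
      rw [hsplit]
      calc ‖∑ j ∈ range (k * n), (T ^ j) x
            + (T ^ (k * n)) (∑ j ∈ range n, (T ^ j) x)‖
          ≤ ‖∑ j ∈ range (k * n), (T ^ j) x‖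
            + ‖(T ^ (k * n)) (∑ j ∈ range n, (T ^ j) x)‖ := norm_add_le _ _
        _ ≤ k * ‖∑ j ∈ range n, (T ^ j) x‖ + ‖∑ j ∈ range n, (T ^ j) x‖ :=
            add_le_add ih (hpow _ _)
        _ = (k + 1 : ℕ) * ‖∑ j ∈ range n, (T ^ j) x‖ := by push_cast; ring
  have hmain : ∀ n k : ℕ, 1 ≤ n → 1 ≤ k → ‖ergAvg T (k * n) x‖ ≤ ‖ergAvg T n x‖ := by
    intro n k hn hk
    have hk' : (0 : ℝ) < k := by exact_mod_cast hk
    have hn' : (0 : ℝ) < n := by exact_mod_cast hn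
    unfold ergAvg
    rw [norm_smul, norm_smul, Real.norm_eq_abs, Real.norm_eq_abs,
      abs_of_nonneg (by positivity), abs_of_nonneg (by positivity)]
    calc ((k * n : ℕ) : ℝ)⁻¹ * ‖∑ j ∈ range (k * n), (T ^ j) x‖
        ≤ ((k * n : ℕ) : ℝ)⁻¹ * (k * ‖∑ j ∈ range n, (T ^ j) x‖) := by
          apply mul_le_mul_of_nonneg_left (hsum n k) (by positivity)
      _ = (n : ℝ)⁻¹ * ‖∑ j ∈ range n, (T ^ j) x‖ := by
          push_cast; field_simp
  refine ⟨hmain, fun y hy => ?_⟩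
  have hbdd : BddBelow (Set.range fun n : ℕ => ‖ergAvg T (n + 1) x‖) :=
    ⟨0, by rintro r ⟨n, rfl⟩; exact norm_nonneg _⟩
  apply le_antisymm
  · refine le_ciInf fun n => ?_
    have hsub : Filter.Tendsto (fun k : ℕ => ergAvg T ((k + 1) * (n + 1)) x)
        Filter.atTop (nhds y) := by
      refine hy.comp (Filter.tendsto_atTop_mono (f := id) ?_ Filter.tendsto_id)
      intro k; simp only [id]; nlinarith
    exact le_of_tendsto hsub.norm
      (Filter.Eventually.of_forall fun k => hmain (n + 1) (k + 1) (by omega) (by omega))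
  · have hshift : Filter.Tendsto (fun n => ‖ergAvg T (n + 1) x‖)
        Filter.atTop (nhds ‖y‖) :=
      (hy.comp (Filter.tendsto_add_atTop_nat 1)).norm
    exact ge_of_tendsto' hshift fun n => ciInf_le hbdd n
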